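/- Let n, m, k be natural numbers with 0 < k ≤ m ≤ n. Let s : Fin n → ℝ be a nonincreasing sequence (the sparse scores, sorted in decreasing order), let d : Fin n → ℝ (the dense scores), let s_D ∈ ℝ satisfy d i ≤ s_D for every i, and let α ∈ [0,1]. Define the interpolated scores φ i = α · s i + (1 − α) · d i. Suppose that for some index m with k ≤ m < n one has α · s m + (1 − α) · s_D ≤ t, where t is the k-th largest value of φ among the indices i < m. Then the multiset of the k largest values of φ over all indices i < n is equal to the multiset of the k largest values of φ over the indices i < m; i.e., stopping the scan at position m (early stopping with the true maximum s_D of the dense scores) returns the actual top-k interpolated scores. -/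

import Mathlib

open Finset

/-- The multiset of the `k` largest values of a real-valued multiset (counted with
multiplicity): sort in nondecreasing order and drop all but the last `k` entries. -/
noncomputable def topk (k : ℕ) (M : Multiset ℝ) : Multiset ℝ :=
  ((M.sort (· ≤ ·)).drop (Multiset.card M - k) : List ℝ)

lemma topk_add (k : ℕ) (A B : Multiset ℝ) (hk : k ≤ Multiset.card A)
    (hB : ∀ b ∈ B, ∀ x ∈ topk k A, b ≤ x) :
    topk k (A + B) = topk k A := by
  classical
  set L : List ℝ := A.sort (· ≤ ·) with hLdef
  have hL : L.Pairwise (· ≤ ·) := Multiset.pairwise_sort _ _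
  have hLlen : L.length = Multiset.card A := Multiset.length_sort _
  set L1 : List ℝ := L.take (Multiset.card A - k) with hL1
  set L2 : List ℝ := L.drop (Multiset.card A - k) with hL2
  have hsplit : L1 ++ L2 = L := List.take_append_drop _ _
  have htopA : topk k A = (L2 : Multiset ℝ) := rfl
  set LB : List ℝ := B.sort (· ≤ ·) with hLB
  have hLBs : LB.Pairwise (· ≤ ·) := Multiset.pairwise_sort _ _
  set M : List ℝ := (List.merge L1 LB (· ≤ ·)) ++ L2 with hM
  have hmergeperm : List.Perm (List.merge L1 LB (fun a b => decide (a ≤ b))) (L1 ++ LB) :=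
    List.merge_perm_append _
  have hMcoe : (M : Multiset ℝ) = A + B := by
    have h1 : (↑(List.merge L1 LB (fun a b => decide (a ≤ b))) : Multiset ℝ)
        = (L1 : Multiset ℝ) + (LB : Multiset ℝ) := by
      rw [Multiset.coe_eq_coe.mpr hmergeperm]; simp
    show (↑(List.merge L1 LB (fun a b => decide (a ≤ b))) : Multiset ℝ)
        + (L2 : Multiset ℝ) = A + B
    rw [h1]
    have : (L1 : Multiset ℝ) + (L2 : Multiset ℝ) = A := by
      rw [show (L1 : Multiset ℝ) + (L2 : Multiset ℝ) = ((L1 ++ L2 : List ℝ) : Multiset ℝ) from rfl, hsplit]; exact Multiset.sort_eq _ _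
    have hB' : (LB : Multiset ℝ) = B := Multiset.sort_eq _ _
    rw [hB', add_right_comm, this]
  have hLsplit := hL
  rw [← hsplit] at hLsplit
  obtain ⟨hL1s, hL2s, hcross⟩ := List.pairwise_append.mp hLsplit
  have hMsorted : M.Pairwise (· ≤ ·) := by
    rw [hM]
    refine List.pairwise_append.mpr ⟨List.Pairwise.merge hL1s hLBs, hL2s, ?_⟩
    intro a ha b hb
    have ha' : a ∈ L1 ++ LB := hmergeperm.mem_iff.mp ha
    rcases List.mem_append.mp ha' with h | h
    · exact hcross a h b hb
    · have haB : a ∈ B := by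
        have := Multiset.mem_sort (α := ℝ) (r := (· ≤ ·)) (s := B) (a := a)
        exact this.mp h
      exact hB a haB b (by rw [htopA]; exact Multiset.mem_coe.mpr hb)
  have hsortAB : Multiset.sort (A + B) (· ≤ ·) = M := by
    apply List.Perm.eq_of_pairwise' (Multiset.pairwise_sort _ _) hMsorted
    rw [← Multiset.coe_eq_coe, Multiset.sort_eq, hMcoe]
  have hL1len : L1.length = Multiset.card A - k := by
    rw [hL1, List.length_take, hLlen]; omega
  have hmlen : (List.merge L1 LB (fun a b => decide (a ≤ b))).length
      = Multiset.card (A + B) - k := by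
    rw [List.length_merge, hL1len]
    have : LB.length = Multiset.card B := Multiset.length_sort _
    rw [this, Multiset.card_add]; omega
  show ((Multiset.sort (A + B) (· ≤ ·)).drop (Multiset.card (A + B) - k) : Multiset ℝ)
      = topk k A
  rw [hsortAB, htopA, hM, ← hmlen, List.drop_left]


/-- Early stopping with the true maximum `s_D` of the dense scores returns the actual
top-`k` interpolated scores: if the best possible interpolated score of the next
(unseen) document does not exceed the `k`-th largest interpolated score `t` seen so
far, then the top-`k` scores among the first `m` documents equal the top-`k` scores
among all `n` documents. -/
theorem early_stopping_topk
    (n m k : ℕ) (hk : 0 < k) (hkm : k ≤ m) (hmn : m < n)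
    (s d : Fin n → ℝ) (hs : Antitone s)
    (s_D : ℝ) (hd : ∀ i, d i ≤ s_D)
    (α : ℝ) (hα0 : 0 ≤ α) (hα1 : α ≤ 1)
    (φ : Fin n → ℝ) (hφ : ∀ i, φ i = α * s i + (1 - α) * d i)
    (t : ℝ)
    (ht_mem : t ∈ topk k (((Finset.univ.filter fun i : Fin n => (i : ℕ) < m)).val.map φ))
    (ht_min : ∀ x ∈ topk k (((Finset.univ.filter fun i : Fin n => (i : ℕ) < m)).val.map φ),
      t ≤ x)
    (hstop : α * s ⟨m, hmn⟩ + (1 - α) * s_D ≤ t) :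
    topk k ((Finset.univ : Finset (Fin n)).val.map φ) =
      topk k (((Finset.univ.filter fun i : Fin n => (i : ℕ) < m)).val.map φ) := by
  classical
  have hsplit : (Finset.univ : Finset (Fin n)).val.map φ
      = ((Finset.univ.filter fun i : Fin n => (i : ℕ) < m)).val.map φ
        + ((Finset.univ.filter fun i : Fin n => ¬ (i : ℕ) < m)).val.map φ := by
    rw [Finset.filter_val, Finset.filter_val, ← Multiset.map_add, Multiset.filter_add_not]
  rw [hsplit]
  apply topk_add
  · rw [Multiset.card_map]
    have hIio : (Finset.univ.filter fun i : Fin n => (i : ℕ) < m)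
        = Finset.Iio ⟨m, hmn⟩ := by
      ext i; simp [Fin.lt_def]
    have : Multiset.card (Finset.univ.filter fun i : Fin n => (i : ℕ) < m).val
        = (Finset.univ.filter fun i : Fin n => (i : ℕ) < m).card := rfl
    rw [this, hIio, Fin.card_Iio]
    exact hkm
  · intro b hb x hx
    obtain ⟨i, hi, rfl⟩ := Multiset.mem_map.mp hb
    have him : m ≤ (i : ℕ) := by
      have := Finset.mem_filter.mp (Finset.mem_val.mp hi)
      omega
    have hφi : φ i ≤ t := by
      rw [hφ]
      calc α * s i + (1 - α) * d i
          ≤ α * s ⟨m, hmn⟩ + (1 - α) * s_D := by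
            have h1 : s i ≤ s ⟨m, hmn⟩ := hs (by exact him)
            have h2 : d i ≤ s_D := hd i
            have h3 : (0:ℝ) ≤ 1 - α := by linarith
            nlinarith
        _ ≤ t := hstop
    exact le_trans hφi (ht_min x hx)
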